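/- Let P be an a.e. positive and a.e. symmetric measurable probability density on Λ^N, and let W be a measurable, a.e. finite, a.e. symmetric function on Λ^N. Suppose U ∈ V_P satisfies F_P(V) ≤ F_P(U) for every V ∈ V_P. Then ρ_U^(m) = ρ^(m) a.e. on Λ^m. -/

import Mathlib

open MeasureTheory Real Filter
open scoped ENNReal

noncomputable section

variable {Λ : Type*} [MeasurableSpace Λ]

/-- The product measure on `Λ^k` (the `k`-fold product of `μ`). -/
def pm (μ : Measure Λ) (k : ℕ) : Measure (Fin k → Λ) := Measure.pi fun _ => μ

/-- A function on `Λ^k` is symmetric if it is invariant under all permutations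
of its variables. -/
def IsSymm' {Λ : Type*} (k : ℕ) (f : (Fin k → Λ) → ℝ) : Prop :=
  ∀ σ : Equiv.Perm (Fin k), ∀ x, f (x ∘ σ) = f x

/-- The `m`-sum `Σ_{1 ≤ i₁ < ⋯ < i_m ≤ N} v(x_{i₁},…,x_{i_m})`. -/
def mSum {Λ : Type*} (N m : ℕ) (v : (Fin m → Λ) → ℝ) (x : Fin N → Λ) : ℝ :=
  ∑ s ∈ Finset.powersetCard m (Finset.univ : Finset (Fin N)),
    if h : s.card = m then v (fun i => x (s.orderEmbOfFin h i)) else 0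

/-- `V` has `m`-sum structure with (symmetric, measurable, real-valued) generator `v`. -/
def HasSumStruct (μ : Measure Λ) (N m : ℕ) (V : (Fin N → Λ) → ℝ)
    (v : (Fin m → Λ) → ℝ) : Prop :=
  IsSymm' m v ∧ Measurable v ∧ V =ᵐ[pm μ N] mSum N m v

/-- The measure `P d^N x`. -/
def Pmeas (μ : Measure Λ) (N : ℕ) (P : (Fin N → Λ) → ℝ) : Measure (Fin N → Λ) :=
  (pm μ N).withDensity fun x => ENNReal.ofReal (P x)

/-- The measure `e^{-W} d^N x`. -/
def Wmeas (μ : Measure Λ) (N : ℕ) (W : (Fin N → Λ) → ℝ) : Measure (Fin N → Λ) :=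
  (pm μ N).withDensity fun x => ENNReal.ofReal (Real.exp (-(W x)))

/-- The partition function `Z(V) = ∫ e^{-V-W} d^N x`, as an extended nonnegative real. -/
def ZE (μ : Measure Λ) (N : ℕ) (W V : (Fin N → Λ) → ℝ) : ℝ≥0∞ :=
  ∫⁻ x, ENNReal.ofReal (Real.exp (-(V x) - W x)) ∂(pm μ N)

/-- The partition function `Z(V)` as a real number. -/
def Zfun (μ : Measure Λ) (N : ℕ) (W V : (Fin N → Λ) → ℝ) : ℝ :=
  (ZE μ N W V).toReal

/-- The functional `F_P(V) = exp(-∫ V P d^N x) / Z(V)`. -/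
def FP (μ : Measure Λ) (N : ℕ) (P W V : (Fin N → Λ) → ℝ) : ℝ :=
  Real.exp (-∫ x, V x ∂(Pmeas μ N P)) / Zfun μ N W V

/-- Membership in the set `V_P`. -/
def memVP (μ : Measure Λ) (N m : ℕ) (P W V : (Fin N → Λ) → ℝ) : Prop :=
  Integrable V (Pmeas μ N P) ∧
  Integrable (fun x => Real.exp (-(V x))) (Wmeas μ N W) ∧
  ∃ v, HasSumStruct μ N m V v

/-- Gluing `(y, z) ∈ Λ^m × Λ^{N-m}` into a point of `Λ^N`. -/
def glue {Λ : Type*} {N m : ℕ} (h : m ≤ N) (y : Fin m → Λ) (z : Fin (N - m) → Λ) :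
    Fin N → Λ :=
  fun i => Fin.append y z (Fin.cast (by omega) i)

/-- The `m`-particle reduction `ρ^{(m)}` of `P`. -/
def rho (μ : Measure Λ) (N m : ℕ) (h : m ≤ N) (P : (Fin N → Λ) → ℝ)
    (y : Fin m → Λ) : ℝ :=
  ∫ z, P (glue h y z) ∂(pm μ (N - m))

/-- The measure `ρ^{(m)} d^m x`. -/
def rhomeas (μ : Measure Λ) (N m : ℕ) (h : m ≤ N) (P : (Fin N → Λ) → ℝ) :
    Measure (Fin m → Λ) :=
  (pm μ m).withDensity fun y => ENNReal.ofReal (rho μ N m h P y)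

/-- Membership in the set `V_{ρ^{(m)}}`. -/
def memVrho (μ : Measure Λ) (N m : ℕ) (h : m ≤ N) (P W V : (Fin N → Λ) → ℝ) : Prop :=
  Integrable (fun x => Real.exp (-(V x))) (Wmeas μ N W) ∧
  ∃ v, HasSumStruct μ N m V v ∧ Integrable v (rhomeas μ N m h P)

/-- The `m`-particle density `ρ_U^{(m)}` associated with the potential `U`. -/
def rhoU (μ : Measure Λ) (N m : ℕ) (h : m ≤ N) (W U : (Fin N → Λ) → ℝ)
    (y : Fin m → Λ) : ℝ :=
  (∫ z, Real.exp (-(W (glue h y z)) - U (glue h y z)) ∂(pm μ (N - m))) / Zfun μ N W U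


set_option linter.unusedSectionVars false
namespace Stmt11

open MeasureTheory

variable {Λ : Type*} [MeasurableSpace Λ]

lemma piCongrLeft_const_apply {ι ι' : Type*} (e : ι ≃ ι') (x : ι → Λ) (b : ι') :
    MeasurableEquiv.piCongrLeft (fun _ : ι' => Λ) e x b = x (e.symm b) := by
  conv_lhs => rw [← e.apply_symm_apply b]
  exact MeasurableEquiv.piCongrLeft_apply_apply (β := fun _ : ι' => Λ) e x (e.symm b)

lemma permMP (μ : Measure Λ) [SigmaFinite μ] (k : ℕ) (σ : Equiv.Perm (Fin k)) :
    MeasurePreserving (fun x : Fin k → Λ => x ∘ σ) (pm μ k) (pm μ k) := by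
  have h := measurePreserving_piCongrLeft (fun _ : Fin k => μ) σ.symm
  have he : ⇑(MeasurableEquiv.piCongrLeft (fun _ : Fin k => Λ) σ.symm)
      = fun x : Fin k → Λ => x ∘ σ := by
    funext x; funext b
    simp [piCongrLeft_const_apply, Function.comp]
  rw [he] at h
  exact h

lemma ae_comp {α β : Type*} [MeasurableSpace α] [MeasurableSpace β] {μ : Measure α}
    {ν : Measure β} {T : α → β} (hT : MeasurePreserving T μ ν) {p : β → Prop}
    (h : ∀ᵐ y ∂ν, p y) : ∀ᵐ x ∂μ, p (T x) :=
  hT.quasiMeasurePreserving.tendsto_ae.eventually h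

/-- The glue measurable equivalence. -/
def glueME (N m : ℕ) (hmN : m ≤ N) :
    ((Fin m → Λ) × (Fin (N - m) → Λ)) ≃ᵐ (Fin N → Λ) :=
  (MeasurableEquiv.sumPiEquivProdPi (fun _ : Fin m ⊕ Fin (N - m) => Λ)).symm.trans
    ((MeasurableEquiv.piCongrLeft (fun _ => Λ) finSumFinEquiv).trans
      (MeasurableEquiv.piCongrLeft (fun _ => Λ) (finCongr (by omega))))

lemma glueME_mp (μ : Measure Λ) [SigmaFinite μ] (N m : ℕ) (hmN : m ≤ N) :
    MeasurePreserving (glueME N m hmN) ((pm μ m).prod (pm μ (N - m))) (pm μ N) := by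
  have h1 := measurePreserving_sumPiEquivProdPi_symm (fun _ : Fin m ⊕ Fin (N - m) => μ)
  have h2 := measurePreserving_piCongrLeft (fun _ : Fin (m + (N - m)) => μ) finSumFinEquiv
  have h3 := measurePreserving_piCongrLeft (fun _ : Fin N => μ)
    (finCongr (by omega : m + (N - m) = N))
  exact (h3.comp h2).comp h1

lemma glue_eq_glueME {N m : ℕ} (hmN : m ≤ N) (y : Fin m → Λ) (z : Fin (N - m) → Λ) :
    glue hmN y z = glueME N m hmN (y, z) := by
  funext i
  show Fin.append y z (Fin.cast (by omega) i) = _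
  simp only [glueME, MeasurableEquiv.trans_apply, piCongrLeft_const_apply]
  have hw : (finCongr (by omega : m + (N - m) = N)).symm i
      = Fin.cast (by omega) i := rfl
  rw [hw]
  set w : Fin (m + (N - m)) := Fin.cast (by omega) i with hwdef
  rcases h : finSumFinEquiv.symm w with a | b
  · have : w = finSumFinEquiv (Sum.inl a) := by rw [← h]; simp
    rw [this]
    simp only [finSumFinEquiv_apply_left]
    rw [Fin.append_left]
    rfl
  · have : w = finSumFinEquiv (Sum.inr b) := by rw [← h]; simp
    rw [this]
    simp only [finSumFinEquiv_apply_right]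
    rw [Fin.append_right]
    rfl


lemma exists_perm_comp {k : ℕ} {β : Type*} (f g : Fin k → β) (hf : Function.Injective f)
    (hg : Function.Injective g) (hr : Set.range f = Set.range g) :
    ∃ e : Equiv.Perm (Fin k), ∀ i, f (e i) = g i := by
  refine ⟨(Equiv.ofInjective g hg).trans ((Equiv.setCongr hr.symm).trans
    (Equiv.ofInjective f hf).symm), fun i => ?_⟩
  simp [Equiv.apply_ofInjective_symm hf]

lemma exists_perm_extend {k N : ℕ} (f g : Fin k → Fin N) (hf : Function.Injective f)
    (hg : Function.Injective g) : ∃ σ : Equiv.Perm (Fin N), ∀ i, σ (f i) = g i := by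
  classical
  have hcard : Fintype.card (↥(Set.range f)ᶜ) = Fintype.card (↥(Set.range g)ᶜ) := by
    rw [Fintype.card_compl_set, Fintype.card_compl_set,
      Set.card_range_of_injective hf, Set.card_range_of_injective hg]
  let eC : (↥(Set.range f)ᶜ) ≃ (↥(Set.range g)ᶜ) := Fintype.equivOfCardEq hcard
  let e0 : (↥(Set.range f)) ≃ (↥(Set.range g)) :=
    (Equiv.ofInjective f hf).symm.trans (Equiv.ofInjective g hg)
  refine ⟨((Equiv.Set.sumCompl (Set.range f)).symm.trans
    ((Equiv.sumCongr e0 eC).trans (Equiv.Set.sumCompl (Set.range g)))), fun i => ?_⟩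
  simp only [Equiv.trans_apply]
  rw [Equiv.Set.sumCompl_symm_apply_of_mem (Set.mem_range_self i)]
  simp [e0]

lemma mem_pc {N m : ℕ} {s : Finset (Fin N)} (hs : s ∈ Finset.powersetCard m Finset.univ) :
    s.card = m := (Finset.mem_powersetCard.mp hs).2

lemma mSum_measurable {N m : ℕ} {v : (Fin m → Λ) → ℝ} (hv : Measurable v) :
    Measurable (mSum N m v) := by
  unfold mSum
  refine Finset.measurable_sum _ fun s hs => ?_
  have hc := mem_pc hs
  simp only [dif_pos hc]
  exact hv.comp (measurable_pi_lambda _ fun i => measurable_pi_apply _)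

lemma mSum_abs_le {N m : ℕ} (v : (Fin m → Λ) → ℝ) (C : ℝ) (hC : ∀ y, |v y| ≤ C)
    (x : Fin N → Λ) : |mSum N m v x| ≤ N.choose m * C := by
  unfold mSum
  refine (Finset.abs_sum_le_sum_abs _ _).trans ?_
  have h1 : ∀ s ∈ Finset.powersetCard m (Finset.univ : Finset (Fin N)),
      |if h : s.card = m then v (fun i => x (s.orderEmbOfFin h i)) else 0| ≤ C := by
    intro s hs
    rw [dif_pos (mem_pc hs)]
    exact hC _
  refine (Finset.sum_le_card_nsmul _ _ C h1).trans ?_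
  rw [Finset.card_powersetCard, Finset.card_univ, Fintype.card_fin, nsmul_eq_mul]

lemma mSum_add_mul {N m : ℕ} (u v : (Fin m → Λ) → ℝ) (t : ℝ) (x : Fin N → Λ) :
    mSum N m (fun y => u y + t * v y) x = mSum N m u x + t * mSum N m v x := by
  unfold mSum
  rw [Finset.mul_sum, ← Finset.sum_add_distrib]
  refine Finset.sum_congr rfl fun s hs => ?_
  have hc := mem_pc hs
  rw [dif_pos hc, dif_pos hc, dif_pos hc]

lemma mSum_symm {N m : ℕ} {v : (Fin m → Λ) → ℝ} (hv : IsSymm' m v) (σ : Equiv.Perm (Fin N))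
    (x : Fin N → Λ) : mSum N m v (x ∘ σ) = mSum N m v x := by
  unfold mSum
  refine Finset.sum_bij' (fun s _ => s.map σ.toEmbedding)
    (fun s _ => s.map σ.symm.toEmbedding) ?_ ?_ ?_ ?_ ?_
  · intro s hs
    simp only [Finset.mem_powersetCard] at hs ⊢
    exact ⟨Finset.subset_univ _, by rw [Finset.card_map]; exact hs.2⟩
  · intro s hs
    simp only [Finset.mem_powersetCard] at hs ⊢
    exact ⟨Finset.subset_univ _, by rw [Finset.card_map]; exact hs.2⟩
  · intro s hs
    ext a
    simp [Finset.mem_map]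
  · intro s hs
    ext a
    simp [Finset.mem_map]
  · intro s hs
    have hc := mem_pc hs
    have hc2 : (s.map σ.toEmbedding).card = m := by rw [Finset.card_map]; exact hc
    rw [dif_pos hc, dif_pos hc2]
    set g1 : Fin m → Fin N := fun i => σ (s.orderEmbOfFin hc i) with hg1
    set g2 : Fin m → Fin N := fun i => (s.map σ.toEmbedding).orderEmbOfFin hc2 i with hg2
    have hinj1 : Function.Injective g1 := σ.injective.comp (s.orderEmbOfFin hc).injective
    have hinj2 : Function.Injective g2 := ((s.map σ.toEmbedding).orderEmbOfFin hc2).injective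
    have hrange : Set.range g1 = Set.range g2 := by
      have r1 : Set.range g1 = σ '' ↑s := by
        rw [hg1, show (fun i => σ ((s.orderEmbOfFin hc) i)) = ⇑σ ∘ ⇑(s.orderEmbOfFin hc)
          from rfl, Set.range_comp, Finset.range_orderEmbOfFin]
      have r2 : Set.range g2 = ↑(s.map σ.toEmbedding) := Finset.range_orderEmbOfFin _ _
      rw [r1, r2, Finset.coe_map]
      rfl
    obtain ⟨e, he⟩ := exists_perm_comp g1 g2 hinj1 hinj2 hrange
    have : (fun i => x (g2 i)) = (fun i => x (g1 i)) ∘ e := by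
      funext i
      simp [← he i]
    rw [show (fun i => (x ∘ σ) (s.orderEmbOfFin hc i)) = fun i => x (g1 i) from rfl, this]
    exact (hv e _).symm


instance pm_sigmaFinite (μ : Measure Λ) [SigmaFinite μ] (k : ℕ) : SigmaFinite (pm μ k) := by
  unfold pm; infer_instance

lemma integrable_of_lintegral_lt {α : Type*} [MeasurableSpace α] {μ : Measure α}
    {g : α → ℝ} (hg : Measurable g) (h0 : ∀ x, 0 ≤ g x)
    (h : ∫⁻ x, ENNReal.ofReal (g x) ∂μ < ⊤) : Integrable g μ := by
  refine ⟨hg.aestronglyMeasurable, ?_⟩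
  rw [hasFiniteIntegral_iff_norm]
  have e : ∀ a, ENNReal.ofReal ‖g a‖ = ENNReal.ofReal (g a) := fun a => by
    rw [Real.norm_eq_abs, abs_of_nonneg (h0 a)]
  simpa only [e] using h

/-- Coordinate permutation as a measurable equivalence. -/
def permME (k : ℕ) (σ : Equiv.Perm (Fin k)) : (Fin k → Λ) ≃ᵐ (Fin k → Λ) :=
  MeasurableEquiv.piCongrLeft (fun _ => Λ) σ.symm

lemma permME_apply (k : ℕ) (σ : Equiv.Perm (Fin k)) (x : Fin k → Λ) :
    permME k σ x = x ∘ σ := by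
  funext b
  simp [permME, piCongrLeft_const_apply, Function.comp]

lemma permMP' (μ : Measure Λ) [SigmaFinite μ] (k : ℕ) (σ : Equiv.Perm (Fin k)) :
    MeasurePreserving (permME (Λ := Λ) k σ) (pm μ k) (pm μ k) :=
  measurePreserving_piCongrLeft (fun _ : Fin k => μ) σ.symm

section Glue

variable {μ : Measure Λ} [SigmaFinite μ]

lemma integrable_glue_prod {N m : ℕ} (hmN : m ≤ N) {F : (Fin N → Λ) → ℝ}
    (hF : Integrable F (pm μ N)) :
    Integrable (fun p : (Fin m → Λ) × (Fin (N - m) → Λ) => F (glue hmN p.1 p.2))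
      ((pm μ m).prod (pm μ (N - m))) := by
  have h := ((glueME_mp μ N m hmN).integrable_comp_emb
    (MeasurableEquiv.measurableEmbedding _)).mpr hF
  have he : (F ∘ (glueME N m hmN)) = fun p : (Fin m → Λ) × (Fin (N - m) → Λ) =>
      F (glue hmN p.1 p.2) := by
    funext p
    simp [Function.comp, glue_eq_glueME]
  rwa [he] at h

lemma integral_glue {N m : ℕ} (hmN : m ≤ N) (F : (Fin N → Λ) → ℝ)
    (hF : Integrable F (pm μ N)) :
    ∫ x, F x ∂pm μ N = ∫ y, ∫ z, F (glue hmN y z) ∂pm μ (N - m) ∂pm μ m := by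
  rw [← (glueME_mp μ N m hmN).integral_comp' F, MeasureTheory.integral_prod _
    (by simpa [Function.comp, glue_eq_glueME] using integrable_glue_prod hmN hF)]
  simp_rw [← glue_eq_glueME]

lemma integrable_glue_inner {N m : ℕ} (hmN : m ≤ N) {F : (Fin N → Λ) → ℝ}
    (hF : Integrable F (pm μ N)) :
    Integrable (fun y => ∫ z, F (glue hmN y z) ∂pm μ (N - m)) (pm μ m) :=
  (integrable_glue_prod hmN hF).integral_prod_left

lemma stronglyMeasurable_glue_inner {N m : ℕ} (hmN : m ≤ N) {F : (Fin N → Λ) → ℝ}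
    (hF : Measurable F) :
    StronglyMeasurable (fun y => ∫ z, F (glue hmN y z) ∂pm μ (N - m)) := by
  have h : StronglyMeasurable (fun p : (Fin m → Λ) × (Fin (N - m) → Λ) =>
      F (glue hmN p.1 p.2)) := by
    have : (fun p : (Fin m → Λ) × (Fin (N - m) → Λ) => F (glue hmN p.1 p.2))
        = F ∘ (glueME N m hmN) := by
      funext p
      simp [Function.comp, glue_eq_glueME]
    rw [this]
    exact (hF.comp (glueME N m hmN).measurable).stronglyMeasurable
  exact h.integral_prod_right'

lemma ae_glue {N m : ℕ} (hmN : m ≤ N) {p : (Fin N → Λ) → Prop}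
    (h : ∀ᵐ x ∂pm μ N, p x) :
    ∀ᵐ y ∂pm μ m, ∀ᵐ z ∂pm μ (N - m), p (glue hmN y z) := by
  have h2 : ∀ᵐ q ∂((pm μ m).prod (pm μ (N - m))), p (glue hmN q.1 q.2) := by
    filter_upwards [ae_comp (glueME_mp μ N m hmN) h] with q hq
    rwa [glue_eq_glueME]
  exact Measure.ae_ae_of_ae_prod h2

lemma glue_castLE {N m : ℕ} (hmN : m ≤ N) (y : Fin m → Λ) (z : Fin (N - m) → Λ) (i : Fin m) :
    glue hmN y z (Fin.castLE hmN i) = y i := by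
  show Fin.append y z (Fin.cast (by omega) (Fin.castLE hmN i)) = y i
  have : Fin.cast (by omega : N = m + (N - m)) (Fin.castLE hmN i)
      = Fin.castAdd (N - m) i := by
    apply Fin.ext
    simp
  rw [this, Fin.append_left]

lemma reduce {N m : ℕ} (hmN : m ≤ N) {v : (Fin m → Λ) → ℝ} (hv : Measurable v)
    {Cv : ℝ} (hvb : ∀ y, |v y| ≤ Cv)
    {f : (Fin N → Λ) → ℝ} (hfi : Integrable f (pm μ N))
    (hfsym : ∀ σ : Equiv.Perm (Fin N), ∀ᵐ x ∂pm μ N, f (x ∘ σ) = f x) :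
    ∫ x, mSum N m v x * f x ∂pm μ N
      = (N.choose m : ℝ) * ∫ y, v y * ∫ z, f (glue hmN y z) ∂pm μ (N - m) ∂pm μ m := by
  have hterm : ∀ g : Fin m → Fin N, Function.Injective g →
      ∫ x, v (fun i => x (Fin.castLE hmN i)) * f x ∂pm μ N
        = ∫ x, v (fun i => x (g i)) * f x ∂pm μ N := by
    intro g hg
    obtain ⟨σ, hσ⟩ := exists_perm_extend (Fin.castLE hmN) g (Fin.castLE_injective hmN) hg
    calc ∫ x, v (fun i => x (Fin.castLE hmN i)) * f x ∂pm μ N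
        = ∫ x, v (fun i => (permME N σ) x (Fin.castLE hmN i)) * f ((permME N σ) x) ∂pm μ N :=
          ((permMP' μ N σ).integral_comp'
            (fun x => v (fun i => x (Fin.castLE hmN i)) * f x)).symm
      _ = ∫ x, v (fun i => x (g i)) * f x ∂pm μ N := by
          apply integral_congr_ae
          filter_upwards [hfsym σ] with x hx
          rw [permME_apply]
          have h1 : (fun i => (x ∘ σ) (Fin.castLE hmN i)) = fun i => x (g i) := by
            funext i
            simp [Function.comp, hσ i]
          rw [h1, hx]
  have hintterm : ∀ g : Fin m → Fin N,
      Integrable (fun x => v (fun i => x (g i)) * f x) (pm μ N) := by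
    intro g
    refine hfi.bdd_mul ?_ (c := Cv) (Eventually.of_forall fun x => ?_)
    · exact (hv.comp (measurable_pi_lambda _ fun i => measurable_pi_apply _)).aestronglyMeasurable
    · rw [Real.norm_eq_abs]
      exact hvb _
  have hsum : (fun x => mSum N m v x * f x) = fun x =>
      ∑ s ∈ Finset.powersetCard m (Finset.univ : Finset (Fin N)),
        (if h : s.card = m then v (fun i => x (s.orderEmbOfFin h i)) else 0) * f x := by
    funext x
    rw [mSum, Finset.sum_mul]
  rw [hsum, integral_finset_sum]
  · have hcongr : ∀ s ∈ Finset.powersetCard m (Finset.univ : Finset (Fin N)),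
        ∫ x, (if h : s.card = m then v (fun i => x (s.orderEmbOfFin h i)) else 0) * f x ∂pm μ N
          = ∫ x, v (fun i => x (Fin.castLE hmN i)) * f x ∂pm μ N := by
      intro s hs
      have hc := mem_pc hs
      simp only [dif_pos hc]
      exact (hterm _ (s.orderEmbOfFin hc).injective).symm
    rw [Finset.sum_congr rfl hcongr, Finset.sum_const, Finset.card_powersetCard,
      Finset.card_univ, Fintype.card_fin, nsmul_eq_mul]
    congr 1
    rw [integral_glue hmN _ (hintterm _)]
    refine integral_congr_ae (Eventually.of_forall fun y => ?_)
    have h2 : ∀ z, (fun i => glue hmN y z (Fin.castLE hmN i)) = y := by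
      intro z
      funext i
      exact glue_castLE hmN y z i
    simp_rw [h2]
    exact integral_const_mul _ _
  · intro s hs
    have hc := mem_pc hs
    simp only [dif_pos hc]
    exact hintterm _

/-- The permutation of `Fin N` extending `τ` on the first `m` coordinates. -/
def extPerm (N m : ℕ) (hmN : m ≤ N) (τ : Equiv.Perm (Fin m)) : Equiv.Perm (Fin N) :=
  (finCongr (by omega : N = m + (N - m))).trans
    ((finSumFinEquiv.symm.trans ((Equiv.sumCongr τ (Equiv.refl (Fin (N - m)))).trans
      finSumFinEquiv)).trans (finCongr (by omega : m + (N - m) = N)))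

lemma glue_comp_extPerm {N m : ℕ} (hmN : m ≤ N) (τ : Equiv.Perm (Fin m))
    (y : Fin m → Λ) (z : Fin (N - m) → Λ) :
    glue hmN (y ∘ τ) z = glue hmN y z ∘ extPerm N m hmN τ := by
  funext i
  have h1 : N = m + (N - m) := by omega
  show Fin.append (y ∘ τ) z (Fin.cast h1 i)
      = Fin.append y z (Fin.cast h1 (extPerm N m hmN τ i))
  have hidx : Fin.cast h1 (extPerm N m hmN τ i)
      = finSumFinEquiv ((Equiv.sumCongr τ (Equiv.refl (Fin (N - m))))
          (finSumFinEquiv.symm (Fin.cast h1 i))) := by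
    apply Fin.ext
    simp [extPerm]
  rw [hidx]
  rcases h : finSumFinEquiv.symm (Fin.cast h1 i) with a | b
  · have hw : Fin.cast h1 i = finSumFinEquiv (Sum.inl a) := by rw [← h]; simp
    rw [hw]
    simp only [Equiv.symm_apply_apply, Equiv.sumCongr_apply, Sum.map_inl,
      finSumFinEquiv_apply_left]
    rw [Fin.append_left, Fin.append_left]
    rfl
  · have hw : Fin.cast h1 i = finSumFinEquiv (Sum.inr b) := by rw [← h]; simp
    rw [hw]
    simp only [Equiv.symm_apply_apply, Equiv.sumCongr_apply, Sum.map_inr,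
      finSumFinEquiv_apply_right]
    rw [Fin.append_right, Fin.append_right]
    rfl

lemma inner_symm {N m : ℕ} (hmN : m ≤ N) {f : (Fin N → Λ) → ℝ}
    (hfsym : ∀ σ : Equiv.Perm (Fin N), ∀ᵐ x ∂pm μ N, f (x ∘ σ) = f x)
    (τ : Equiv.Perm (Fin m)) :
    ∀ᵐ y ∂pm μ m, ∫ z, f (glue hmN (y ∘ τ) z) ∂pm μ (N - m)
      = ∫ z, f (glue hmN y z) ∂pm μ (N - m) := by
  filter_upwards [ae_glue hmN (hfsym (extPerm N m hmN τ))] with y hy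
  refine integral_congr_ae ?_
  filter_upwards [hy] with z hz
  rw [glue_comp_extPerm hmN τ y z]
  exact hz

end Glue

end Stmt11

open Stmt11

/-- If `P` is an a.e. positive, a.e. symmetric probability density,
`W` is measurable, a.e. finite and a.e. symmetric, and `U ∈ V_P` maximizes `F_P`
over `V_P`, then `ρ_U^{(m)} = ρ^{(m)}` a.e. on `Λ^m`. -/
theorem statement11 (μ : Measure Λ) [SigmaFinite μ] (hμ : μ ≠ 0)
    (N m : ℕ) (hN : 2 ≤ N) (hm : 1 ≤ m) (hmN : m ≤ N)
    (P W : (Fin N → Λ) → ℝ) (hPmeas : Measurable P)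
    (hPprob : ∫⁻ x, ENNReal.ofReal (P x) ∂(pm μ N) = 1)
    (hPpos : ∀ᵐ x ∂(pm μ N), 0 < P x)
    (hPsymm : ∀ σ : Equiv.Perm (Fin N), ∀ᵐ x ∂(pm μ N), P (x ∘ σ) = P x)
    (hWmeas : Measurable W)
    (hWsymm : ∀ σ : Equiv.Perm (Fin N), ∀ᵐ x ∂(pm μ N), W (x ∘ σ) = W x)
    (U : (Fin N → Λ) → ℝ) (hU : memVP μ N m P W U)
    (hUmax : ∀ V, memVP μ N m P W V → FP μ N P W V ≤ FP μ N P W U) :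
    rhoU μ N m hmN W U =ᵐ[pm μ m] rho μ N m hmN P := by
  classical
  obtain ⟨hUint, hUexp, u, hu_symm, hu_meas, hUeq⟩ := hU
  set U' : (Fin N → Λ) → ℝ := mSum N m u with hU'def
  set G : (Fin N → Λ) → ℝ := fun x => Real.exp (-(U' x) - W x) with hGdef
  have hGmeas : Measurable G :=
    Real.measurable_exp.comp ((mSum_measurable hu_meas).neg.sub hWmeas)
  have hGpos : ∀ x, 0 < G x := fun x => Real.exp_pos _
  -- positivity of the base measure
  have hν0 : (pm μ N) Set.univ ≠ 0 := by
    rw [pm, Measure.pi_univ]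
    simp only [Finset.prod_const, Finset.card_univ, Fintype.card_fin]
    intro hcontra
    exact (Measure.measure_univ_ne_zero.mpr hμ)
      (pow_eq_zero_iff (n := N) (by omega) |>.mp hcontra)
  have hposZ : ∀ (g : (Fin N → Λ) → ℝ), Measurable g → (∀ x, 0 < g x) →
      0 < ∫⁻ x, ENNReal.ofReal (g x) ∂(pm μ N) := by
    intro g hg hgpos
    rw [lintegral_pos_iff_support (hg.ennreal_ofReal)]
    have hsupp : (Function.support fun x => ENNReal.ofReal (g x)) = Set.univ := by
      ext x
      simp only [Function.mem_support, Set.mem_univ, iff_true, ne_eq, ENNReal.ofReal_eq_zero,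
        not_le]
      exact hgpos x
    rw [hsupp]
    exact pos_iff_ne_zero.mpr hν0
  -- the partition functions
  have hZE : ZE μ N W U = ∫⁻ x, ENNReal.ofReal (G x) ∂(pm μ N) := by
    unfold ZE
    refine lintegral_congr_ae ?_
    filter_upwards [hUeq] with x hx
    rw [hx]
  have hmW : Measurable fun x : Fin N → Λ => ENNReal.ofReal (Real.exp (-(W x))) :=
    (Real.measurable_exp.comp hWmeas.neg).ennreal_ofReal
  have hmU' : Measurable fun x : Fin N → Λ => ENNReal.ofReal (Real.exp (-(U' x))) :=
    (Real.measurable_exp.comp (mSum_measurable hu_meas).neg).ennreal_ofReal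
  have hGsplit : ∀ x, ENNReal.ofReal (G x)
      = ((fun x => ENNReal.ofReal (Real.exp (-(W x))))
        * (fun x => ENNReal.ofReal (Real.exp (-(U' x))))) x := by
    intro x
    have hgx : G x = Real.exp (-(W x)) * Real.exp (-(U' x)) := by
      rw [hGdef]
      simp only
      rw [← Real.exp_add]
      congr 1
      ring
    rw [Pi.mul_apply, hgx, ENNReal.ofReal_mul (Real.exp_nonneg _)]
  have hZfin : ZE μ N W U < ⊤ := by
    rw [hZE]
    have h1 : ∫⁻ x, ENNReal.ofReal (G x) ∂(pm μ N)
        = ∫⁻ x, ENNReal.ofReal (Real.exp (-(U' x))) ∂(Wmeas μ N W) := by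
      rw [Wmeas, lintegral_withDensity_eq_lintegral_mul (pm μ N) hmW hmU']
      exact lintegral_congr hGsplit
    rw [h1]
    have hac : (Wmeas μ N W) ≪ (pm μ N) := withDensity_absolutelyContinuous _ _
    have hWae : U =ᵐ[Wmeas μ N W] U' := hac.ae_le hUeq
    have h2 : ∫⁻ x, ENNReal.ofReal (Real.exp (-(U' x))) ∂(Wmeas μ N W)
        = ∫⁻ x, ENNReal.ofReal (Real.exp (-(U x))) ∂(Wmeas μ N W) := by
      refine lintegral_congr_ae ?_
      filter_upwards [hWae] with x hx
      rw [hx]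
    rw [h2]
    have h3 := hUexp.2
    rw [hasFiniteIntegral_iff_norm] at h3
    have h4 : ∀ x : Fin N → Λ, ENNReal.ofReal ‖Real.exp (-(U x))‖
        = ENNReal.ofReal (Real.exp (-(U x))) := fun x => by
      rw [Real.norm_eq_abs, Real.abs_exp]
    simpa only [h4] using h3
  have hZpos : 0 < ZE μ N W U := by
    rw [hZE]
    exact hposZ G hGmeas hGpos
  set z0 : ℝ := Zfun μ N W U with hz0def
  have hz0pos : 0 < z0 := ENNReal.toReal_pos hZpos.ne' hZfin.ne
  have hGint : Integrable G (pm μ N) :=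
    integrable_of_lintegral_lt hGmeas (fun x => (hGpos x).le) (hZE ▸ hZfin)
  have hz0eq : z0 = ∫ x, G x ∂(pm μ N) := by
    rw [hz0def, Zfun, hZE,
      ← integral_eq_lintegral_of_nonneg_ae (Eventually.of_forall fun x => (hGpos x).le)
        hGmeas.aestronglyMeasurable]
  -- symmetry of G a.e.
  have hGsymm : ∀ σ : Equiv.Perm (Fin N), ∀ᵐ x ∂(pm μ N), G (x ∘ σ) = G x := by
    intro σ
    filter_upwards [hWsymm σ] with x hx
    rw [hGdef]
    simp only
    rw [hx, hU'def, mSum_symm hu_symm σ x]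
  -- P is integrable
  have hPnn : ∀ᵐ x ∂(pm μ N), 0 ≤ P x := by
    filter_upwards [hPpos] with x hx
    exact hx.le
  have hPint : Integrable P (pm μ N) := by
    refine ⟨hPmeas.aestronglyMeasurable, ?_⟩
    rw [hasFiniteIntegral_iff_norm]
    have h1 : ∫⁻ x, ENNReal.ofReal ‖P x‖ ∂(pm μ N) = 1 := by
      rw [← hPprob]
      refine lintegral_congr_ae ?_
      filter_upwards [hPnn] with x hx
      rw [Real.norm_eq_abs, abs_of_nonneg hx]
    rw [h1]
    exact ENNReal.one_lt_top
  -- Pmeas is a probability measure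
  haveI hPprobMeas : IsProbabilityMeasure (Pmeas μ N P) := by
    constructor
    rw [Pmeas, withDensity_apply _ MeasurableSet.univ, setLIntegral_univ, hPprob]
  -- integration against Pmeas
  have hPmeasInt : ∀ g : (Fin N → Λ) → ℝ, Measurable g →
      ∫ x, g x ∂(Pmeas μ N P) = ∫ x, g x * P x ∂(pm μ N) := by
    intro g hg
    have he : Pmeas μ N P
        = (pm μ N).withDensity (fun x => ((fun x => (P x).toNNReal) x : ℝ≥0∞)) := rfl
    rw [he, integral_withDensity_eq_integral_smul hPmeas.real_toNNReal g]
    refine integral_congr_ae ?_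
    filter_upwards [hPnn] with x hx
    simp only [NNReal.smul_def, smul_eq_mul, Real.coe_toNNReal _ hx]
    ring
  -- the reduced one-particle functions
  set gG : (Fin m → Λ) → ℝ := fun y => ∫ z, G (glue hmN y z) ∂pm μ (N - m) with hgGdef
  set gP : (Fin m → Λ) → ℝ := fun y => ∫ z, P (glue hmN y z) ∂pm μ (N - m) with hgPdef
  -- the key variational identity
  have key : ∀ v : (Fin m → Λ) → ℝ, Measurable v → IsSymm' m v → (∀ y, |v y| ≤ 1) →
      ∫ y, v y * gG y ∂pm μ m = z0 * ∫ y, v y * gP y ∂pm μ m := by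
    intro v hvmeas hvsymm hvb
    simp only [hgGdef, hgPdef]
    set B : (Fin N → Λ) → ℝ := mSum N m v with hBdef
    have hBmeas : Measurable B := mSum_measurable hvmeas
    set Cb : ℝ := (N.choose m : ℝ) with hCbdef
    have hCb0 : 0 < Cb := by
      rw [hCbdef]
      exact_mod_cast Nat.choose_pos hmN
    have hBb : ∀ x, |B x| ≤ Cb := fun x => by
      simpa using mSum_abs_le v 1 hvb x
    have hBintP : Integrable B (Pmeas μ N P) := by
      refine Integrable.mono' (integrable_const Cb) hBmeas.aestronglyMeasurable ?_
      exact Eventually.of_forall fun x => by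
        rw [Real.norm_eq_abs]; exact hBb x
    set bP : ℝ := ∫ x, B x ∂(Pmeas μ N P) with hbPdef
    set bG : ℝ := ∫ x, B x * G x ∂(pm μ N) with hbGdef
    set q : ℝ := ∫ x, (B x) ^ 2 * G x ∂(pm μ N) with hqdef
    have hBG : Integrable (fun x => B x * G x) (pm μ N) := by
      refine hGint.bdd_mul hBmeas.aestronglyMeasurable (c := Cb) (Eventually.of_forall fun x => ?_)
      rw [Real.norm_eq_abs]; exact hBb x
    have hB2G : Integrable (fun x => (B x) ^ 2 * G x) (pm μ N) := by
      refine hGint.bdd_mul (hBmeas.pow_const 2).aestronglyMeasurable (c := Cb ^ 2) (Eventually.of_forall fun x => ?_)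
      rw [Real.norm_eq_abs, abs_pow]
      exact pow_le_pow_left₀ (abs_nonneg _) (hBb x) 2
    have hq0 : 0 ≤ q := by
      rw [hqdef]
      refine integral_nonneg fun x => ?_
      positivity
    -- membership of the perturbed potential
    have hmem : ∀ t : ℝ, memVP μ N m P W (fun x => U x + t * B x) := by
      intro t
      refine ⟨hUint.add ((hBintP.const_mul t) : Integrable (fun x => t * B x) _), ?_, ?_⟩
      · have he : (fun x => Real.exp (-(U x + t * B x)))
            = fun x => Real.exp (-(t * B x)) * Real.exp (-(U x)) := by
          funext x
          rw [← Real.exp_add]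
          congr 1
          ring
        rw [he]
        refine hUexp.bdd_mul
          (Real.measurable_exp.comp (hBmeas.const_mul t).neg).aestronglyMeasurable
          (c := Real.exp (|t| * Cb)) (Eventually.of_forall fun x => ?_)
        rw [Real.norm_eq_abs, Real.abs_exp]
        apply Real.exp_le_exp.mpr
        calc -(t * B x) ≤ |t * B x| := neg_le_abs _
          _ = |t| * |B x| := abs_mul _ _
          _ ≤ |t| * Cb := mul_le_mul_of_nonneg_left (hBb x) (abs_nonneg t)
      · refine ⟨fun y => u y + t * v y, ?_, hu_meas.add ((hvmeas.const_mul t)), ?_⟩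
        · intro σ x
          simp only
          rw [hu_symm σ x, hvsymm σ x]
        · filter_upwards [hUeq] with x hx
          show U x + t * B x = mSum N m (fun y => u y + t * v y) x
          rw [mSum_add_mul u v t x, hx, hU'def, hBdef]
    -- the basic inequality from maximality
    have hineq : ∀ t : ℝ, Real.exp (-(t * bP)) * z0 ≤ Zfun μ N W (fun x => U x + t * B x) := by
      intro t
      have h := hUmax _ (hmem t)
      unfold FP at h
      set zt := Zfun μ N W (fun x => U x + t * B x) with hztdef
      have hZEt : ZE μ N W (fun x => U x + t * B x)
          = ∫⁻ x, ENNReal.ofReal (Real.exp (-(t * B x)) * G x) ∂(pm μ N) := by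
        unfold ZE
        refine lintegral_congr_ae ?_
        filter_upwards [hUeq] with x hx
        have hgg : Real.exp (-(t * B x)) * G x
            = Real.exp (-(t * B x) + (-(U' x) - W x)) := by
          rw [hGdef]
          simp only
          rw [← Real.exp_add]
        rw [hx, hgg]
        congr 2
        ring
      have hZEtfin : ZE μ N W (fun x => U x + t * B x) < ⊤ := by
        rw [hZEt]
        calc ∫⁻ x, ENNReal.ofReal (Real.exp (-(t * B x)) * G x) ∂(pm μ N)
            ≤ ∫⁻ x, ENNReal.ofReal (Real.exp (|t| * Cb)) * ENNReal.ofReal (G x) ∂(pm μ N) := by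
              refine lintegral_mono fun x => ?_
              rw [← ENNReal.ofReal_mul (Real.exp_nonneg _)]
              refine ENNReal.ofReal_le_ofReal ?_
              refine mul_le_mul_of_nonneg_right ?_ (hGpos x).le
              apply Real.exp_le_exp.mpr
              calc -(t * B x) ≤ |t * B x| := neg_le_abs _
                _ = |t| * |B x| := abs_mul _ _
                _ ≤ |t| * Cb := mul_le_mul_of_nonneg_left (hBb x) (abs_nonneg t)
          _ = ENNReal.ofReal (Real.exp (|t| * Cb)) * ∫⁻ x, ENNReal.ofReal (G x) ∂(pm μ N) :=
              lintegral_const_mul _ hGmeas.ennreal_ofReal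
          _ < ⊤ := ENNReal.mul_lt_top ENNReal.ofReal_lt_top (hZE ▸ hZfin)
      have hZEtpos : 0 < ZE μ N W (fun x => U x + t * B x) := by
        rw [hZEt]
        refine hposZ _ ((Real.measurable_exp.comp (hBmeas.const_mul t).neg).mul hGmeas)
          fun x => ?_
        positivity
      have hztpos : 0 < zt := ENNReal.toReal_pos hZEtpos.ne' hZEtfin.ne
      have hVtint : ∫ x, (U x + t * B x) ∂(Pmeas μ N P)
          = (∫ x, U x ∂(Pmeas μ N P)) + t * bP := by
        rw [integral_add hUint (hBintP.const_mul t), integral_const_mul]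
      rw [hVtint] at h
      rw [div_le_div_iff₀ hztpos hz0pos] at h
      have hexp : Real.exp (-((∫ x, U x ∂(Pmeas μ N P)) + t * bP))
          = Real.exp (-∫ x, U x ∂(Pmeas μ N P)) * Real.exp (-(t * bP)) := by
        rw [← Real.exp_add]
        congr 1
        ring
      rw [hexp] at h
      refine (mul_le_mul_iff_right₀ (Real.exp_pos (-∫ x, U x ∂(Pmeas μ N P)))).mp ?_
      rw [← mul_assoc]
      exact h
    -- identify zt with an integral and bound it
    have hzt_eq : ∀ t : ℝ, Zfun μ N W (fun x => U x + t * B x)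
        = ∫ x, Real.exp (-(t * B x)) * G x ∂(pm μ N) := by
      intro t
      have hZEt : ZE μ N W (fun x => U x + t * B x)
          = ∫⁻ x, ENNReal.ofReal (Real.exp (-(t * B x)) * G x) ∂(pm μ N) := by
        unfold ZE
        refine lintegral_congr_ae ?_
        filter_upwards [hUeq] with x hx
        have hgg : Real.exp (-(t * B x)) * G x
            = Real.exp (-(t * B x) + (-(U' x) - W x)) := by
          rw [hGdef]
          simp only
          rw [← Real.exp_add]
        rw [hx, hgg]
        congr 2
        ring
      rw [Zfun, hZEt, ← integral_eq_lintegral_of_nonneg_ae (f := fun x => Real.exp (-(t * B x)) * G x)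
        (Eventually.of_forall fun x => mul_nonneg (Real.exp_nonneg _) (hGpos x).le)
        ((Real.measurable_exp.comp (hBmeas.const_mul t).neg).mul hGmeas).aestronglyMeasurable]
    -- upper bound for zt for small t
    have hUB : ∀ t : ℝ, |t| ≤ 1 / (Cb + 1) →
        ∫ x, Real.exp (-(t * B x)) * G x ∂(pm μ N) ≤ z0 - t * bG + t ^ 2 * q := by
      intro t ht
      have hexpint : Integrable (fun x => Real.exp (-(t * B x)) * G x) (pm μ N) := by
        refine hGint.bdd_mul
          (Real.measurable_exp.comp (hBmeas.const_mul t).neg).aestronglyMeasurable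
          (c := Real.exp (|t| * Cb)) (Eventually.of_forall fun x => ?_)
        rw [Real.norm_eq_abs, Real.abs_exp]
        apply Real.exp_le_exp.mpr
        calc -(t * B x) ≤ |t * B x| := neg_le_abs _
          _ = |t| * |B x| := abs_mul _ _
          _ ≤ |t| * Cb := mul_le_mul_of_nonneg_left (hBb x) (abs_nonneg t)
      have hrhsint : Integrable (fun x => G x - t * (B x * G x) + t ^ 2 * ((B x) ^ 2 * G x))
          (pm μ N) := (hGint.sub (hBG.const_mul t)).add (hB2G.const_mul (t ^ 2))
      have hptwise : ∀ x, Real.exp (-(t * B x)) * G x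
          ≤ G x - t * (B x * G x) + t ^ 2 * ((B x) ^ 2 * G x) := by
        intro x
        have hsb : |-(t * B x)| ≤ 1 := by
          rw [abs_neg, abs_mul]
          calc |t| * |B x| ≤ (1 / (Cb + 1)) * Cb := by
                refine mul_le_mul ht (hBb x) (abs_nonneg _) ?_
                positivity
            _ ≤ 1 := by
              rw [div_mul_eq_mul_div, div_le_one (by positivity)]
              linarith
        have := Real.abs_exp_sub_one_sub_id_le hsb
        have hexple : Real.exp (-(t * B x)) ≤ 1 + (-(t * B x)) + (-(t * B x)) ^ 2 := by
          have h1 := abs_le.mp this |>.2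
          nlinarith [this, abs_le.mp this]
        calc Real.exp (-(t * B x)) * G x
            ≤ (1 + (-(t * B x)) + (-(t * B x)) ^ 2) * G x :=
              mul_le_mul_of_nonneg_right hexple (hGpos x).le
          _ = G x - t * (B x * G x) + t ^ 2 * ((B x) ^ 2 * G x) := by ring
      calc ∫ x, Real.exp (-(t * B x)) * G x ∂(pm μ N)
          ≤ ∫ x, (G x - t * (B x * G x) + t ^ 2 * ((B x) ^ 2 * G x)) ∂(pm μ N) :=
            integral_mono hexpint hrhsint hptwise
        _ = z0 - t * bG + t ^ 2 * q := by
            have hA : Integrable (fun x => G x - t * (B x * G x)) (pm μ N) :=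
              hGint.sub (hBG.const_mul t)
            have hB' : Integrable (fun x => t ^ 2 * ((B x) ^ 2 * G x)) (pm μ N) :=
              hB2G.const_mul (t ^ 2)
            rw [integral_add hA hB',
              integral_sub hGint (hBG.const_mul t), integral_const_mul, integral_const_mul,
              ← hz0eq, ← hbGdef, ← hqdef]
    -- conclude b_G = b_P * z0
    have hc0 : bG - bP * z0 = 0 := by
      set c : ℝ := bG - bP * z0 with hcdef
      have hmain : ∀ t : ℝ, |t| ≤ 1 / (Cb + 1) → t * c ≤ t ^ 2 * q := by
        intro t ht
        have h1 := hineq t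
        rw [hzt_eq t] at h1
        have h2 := hUB t ht
        have h3 : (1 - t * bP) * z0 ≤ Real.exp (-(t * bP)) * z0 := by
          refine mul_le_mul_of_nonneg_right ?_ hz0pos.le
          have := Real.add_one_le_exp (-(t * bP))
          linarith
        have hct : t * c = t * bG - t * (bP * z0) := by rw [hcdef]; ring
        have hexp2 : (1 - t * bP) * z0 = z0 - t * (bP * z0) := by ring
        have htb : t ^ 2 * q = t ^ 2 * q := rfl
        have hbg : t * bG = t * bG := rfl
        linarith [h1, h2, h3, hct, hexp2]
      by_contra hc
      have habs : 0 < |c| := abs_pos.mpr hc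
      set t : ℝ := min (1 / (Cb + 1)) (|c| / (2 * (q + 1))) with htdef
      have ht0 : 0 < t := by
        apply lt_min
        · positivity
        · positivity
      have ht1 : |t| ≤ 1 / (Cb + 1) := by
        rw [abs_of_pos ht0]
        exact min_le_left _ _
      have ht2 : t ≤ |c| / (2 * (q + 1)) := min_le_right _ _
      -- apply hmain with t and -t
      have hp := hmain t ht1
      have hn := hmain (-t) (by rwa [abs_neg])
      have hcle : c ≤ t * q := by
        have := (mul_le_mul_iff_right₀ ht0).mp (by linarith [hp] : t * c ≤ t * (t * q))
        exact this
      have hcge : -c ≤ t * q := by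
        have h4 : (-t) * c ≤ (-t) ^ 2 * q := hn
        have h5 : t * (-c) ≤ t * (t * q) := by nlinarith
        exact (mul_le_mul_iff_right₀ ht0).mp h5
      have : |c| ≤ t * q := abs_le.mpr ⟨by linarith, hcle⟩
      have hfin : t * q < |c| := by
        calc t * q ≤ (|c| / (2 * (q + 1))) * q := mul_le_mul_of_nonneg_right ht2 hq0
          _ < |c| := by
            rw [div_mul_eq_mul_div, div_lt_iff₀ (by positivity)]
            nlinarith
      linarith
    -- reduce both sides to m-particle integrals
    have hredG : bG = (N.choose m : ℝ)
        * ∫ y, v y * ∫ z, G (glue hmN y z) ∂pm μ (N - m) ∂pm μ m := by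
      rw [hbGdef, hBdef]
      exact reduce hmN hvmeas hvb hGint hGsymm
    have hredP : bP = (N.choose m : ℝ)
        * ∫ y, v y * ∫ z, P (glue hmN y z) ∂pm μ (N - m) ∂pm μ m := by
      rw [hbPdef, hPmeasInt B hBmeas, hBdef]
      exact reduce hmN hvmeas hvb hPint hPsymm
    have hcc : bG = bP * z0 := by linarith [hc0]
    rw [hredG, hredP] at hcc
    have hchoose : (N.choose m : ℝ) ≠ 0 :=
      Nat.cast_ne_zero.mpr (Nat.choose_pos hmN).ne'
    rw [mul_comm ((N.choose m : ℝ) * _) z0, ← mul_assoc, mul_comm z0, mul_assoc] at hcc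
    have := mul_left_cancel₀ hchoose hcc
    linarith [this]
  -- extraction of the a.e. identity
  have hgGmeas : Measurable gG := by
    rw [hgGdef]
    exact (stronglyMeasurable_glue_inner hmN hGmeas).measurable
  have hgPmeas : Measurable gP := by
    rw [hgPdef]
    exact (stronglyMeasurable_glue_inner hmN hPmeas).measurable
  have hgGint : Integrable gG (pm μ m) := by
    rw [hgGdef]
    exact integrable_glue_inner hmN hGint
  have hgPint : Integrable gP (pm μ m) := by
    rw [hgPdef]
    exact integrable_glue_inner hmN hPint
  set D : (Fin m → Λ) → ℝ := fun y => gG y - z0 * gP y with hDdef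
  have hDmeas : Measurable D := hgGmeas.sub (hgPmeas.const_mul z0)
  have hDint : Integrable D (pm μ m) := hgGint.sub (hgPint.const_mul z0)
  have hDsymmae : ∀ τ : Equiv.Perm (Fin m), ∀ᵐ y ∂pm μ m, D (y ∘ τ) = D y := by
    intro τ
    filter_upwards [inner_symm hmN hGsymm τ, inner_symm hmN hPsymm τ] with y h1 h2
    simp only [hDdef, hgGdef, hgPdef]
    rw [h1, h2]
  have hae : ∀ᵐ y ∂pm μ m, ∀ τ : Equiv.Perm (Fin m), D (y ∘ τ) = D y :=
    ae_all_iff.mpr hDsymmae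
  set Dsym : (Fin m → Λ) → ℝ := fun y => ∑ τ : Equiv.Perm (Fin m), D (y ∘ τ) with hDsymdef
  have hDsymMeas : Measurable Dsym := by
    rw [hDsymdef]
    refine Finset.measurable_sum _ fun τ _ => ?_
    exact hDmeas.comp (measurable_pi_lambda _ fun i => measurable_pi_apply _)
  have hDsymSymm : ∀ (τ0 : Equiv.Perm (Fin m)) (y : Fin m → Λ), Dsym (y ∘ τ0) = Dsym y := by
    intro τ0 y
    simp only [hDsymdef]
    refine Fintype.sum_equiv (Equiv.mulLeft τ0) _ _ fun τ => ?_
    rfl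
  set v : (Fin m → Λ) → ℝ := fun y => if 0 ≤ Dsym y then (1 : ℝ) else -1 with hvdef
  have hvmeas : Measurable v := by
    rw [hvdef]
    exact Measurable.ite (measurableSet_le measurable_const hDsymMeas) measurable_const
      measurable_const
  have hvsymm : IsSymm' m v := by
    intro τ x
    simp only [hvdef]
    rw [hDsymSymm τ x]
  have hvb : ∀ y, |v y| ≤ 1 := by
    intro y
    simp only [hvdef]
    split_ifs <;> simp
  have hkey := key v hvmeas hvsymm hvb
  have hvD : ∫ y, v y * D y ∂pm μ m = 0 := by
    have hvas : AEStronglyMeasurable v (pm μ m) := hvmeas.aestronglyMeasurable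
    have hvbd : ∃ C, ∀ y, ‖v y‖ ≤ C := ⟨1, fun y => by rw [Real.norm_eq_abs]; exact hvb y⟩
    have h1 : Integrable (fun y => v y * gG y) (pm μ m) := hgGint.bdd_mul hvas (c := hvbd.choose) (Eventually.of_forall hvbd.choose_spec)
    have h2 : Integrable (fun y => v y * (z0 * gP y)) (pm μ m) :=
      (hgPint.const_mul z0).bdd_mul hvas (c := hvbd.choose) (Eventually.of_forall hvbd.choose_spec)
    have he : (fun y => v y * D y) = fun y => v y * gG y - v y * (z0 * gP y) := by
      funext y
      simp only [hDdef]
      ring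
    rw [he, integral_sub h1 h2]
    have h3 : ∫ y, v y * (z0 * gP y) ∂pm μ m = z0 * ∫ y, v y * gP y ∂pm μ m := by
      rw [← integral_const_mul]
      congr 1
      funext y
      ring
    rw [h3, hkey, sub_self]
  have habs : ∀ᵐ y ∂pm μ m, v y * D y = |D y| := by
    filter_upwards [hae] with y hy
    have hcard : 0 < (Fintype.card (Equiv.Perm (Fin m)) : ℝ) := by
      exact_mod_cast Fintype.card_pos
    have hDsymval : Dsym y = (Fintype.card (Equiv.Perm (Fin m)) : ℝ) * D y := by
      simp only [hDsymdef]
      rw [Finset.sum_congr rfl fun τ _ => hy τ, Finset.sum_const, Finset.card_univ,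
        nsmul_eq_mul]
    simp only [hvdef]
    by_cases hDy : 0 ≤ D y
    · rw [if_pos (by rw [hDsymval]; exact mul_nonneg hcard.le hDy), one_mul,
        abs_of_nonneg hDy]
    · push_neg at hDy
      rw [if_neg (by rw [hDsymval]; push_neg; exact mul_neg_of_pos_of_neg hcard hDy),
        neg_one_mul, abs_of_neg hDy]
  have hDzero : ∀ᵐ y ∂pm μ m, D y = 0 := by
    have hint : Integrable (fun y => |D y|) (pm μ m) := hDint.abs
    have h0 : ∫ y, |D y| ∂pm μ m = 0 := by
      rw [← hvD]
      exact (integral_congr_ae habs).symm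
    have := (integral_eq_zero_iff_of_nonneg (fun y => abs_nonneg _) hint).mp h0
    filter_upwards [this] with y hy
    exact abs_eq_zero.mp hy
  -- conclusion
  have hUae : ∀ᵐ y ∂pm μ m,
      ∫ z, Real.exp (-(W (glue hmN y z)) - U (glue hmN y z)) ∂pm μ (N - m) = gG y := by
    filter_upwards [ae_glue hmN hUeq] with y hy
    simp only [hgGdef]
    refine integral_congr_ae ?_
    filter_upwards [hy] with z hz
    rw [hz, hGdef]
    simp only
    congr 1
    ring
  filter_upwards [hUae, hDzero] with y h1 h2
  show (∫ z, Real.exp (-(W (glue hmN y z)) - U (glue hmN y z)) ∂pm μ (N - m)) / Zfun μ N W U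
      = rho μ N m hmN P y
  rw [h1, ← hz0def]
  have h3 : gG y = z0 * gP y := by
    simp only [hDdef] at h2
    linarith
  have h4 : rho μ N m hmN P y = gP y := by
    simp only [hgPdef]
    rfl
  rw [h3, h4, mul_comm, mul_div_assoc, div_self hz0pos.ne', mul_one]

end
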